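/- Let Γ : ℝ≥0^n → ℝ≥0^n be a MAX-preserving map with Γ_i(x) = max_j γ_{i,j}(x_j) for non-decreasing continuous functions γ_{i,j} with γ_{i,j}(0)=0, which satisfies the cyclic small-gain conditions. Then Γ(Q(x)) ≤ Q(x) and Q(x) ≥ x for all x ∈ ℝ≥0^n, where Q(x) = MAX{x, Γ(x), Γ^(2)(x), …, Γ^(n-1)(x)}. -/

import Mathlib

open scoped NNReal

/-- The composition `γ_{i₁,i₂} ∘ γ_{i₂,i₃} ∘ ⋯ ∘ γ_{i_r,i₁}` along the cycle
given by the list `l = [i₁, …, i_r]`. -/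
def cycleGain {n : ℕ} (γ : Fin n → Fin n → ℝ≥0 → ℝ≥0) (l : List (Fin n)) :
    ℝ≥0 → ℝ≥0 :=
  ((l.zip (l.rotate 1)).map fun p => γ p.1 p.2).foldr (· ∘ ·) id

/-- `γ` satisfies the cyclic small-gain conditions: the gain along every cycle of
pairwise distinct indices (including the trivial cycles `γ_{i,i}`) is strictly
below the identity on `(0,∞)`. -/
def CyclicSmallGain {n : ℕ} (γ : Fin n → Fin n → ℝ≥0 → ℝ≥0) : Prop :=
  ∀ l : List (Fin n), l.Nodup → l ≠ [] → ∀ s : ℝ≥0, 0 < s → cycleGain γ l s < s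

namespace SGaux

variable {n : ℕ}

/-- Composition of gains along the list `l` ending with an edge into `v`. -/
def chainTo (γ : Fin n → Fin n → ℝ≥0 → ℝ≥0) : List (Fin n) → Fin n → ℝ≥0 → ℝ≥0
  | [], _ => id
  | [i], v => γ i v
  | i :: j :: l, v => γ i j ∘ chainTo γ (j :: l) v

/-- The value of a path: gains composed along the path applied to `x` at the last vertex. -/
def pval (γ : Fin n → Fin n → ℝ≥0 → ℝ≥0) (x : Fin n → ℝ≥0) : List (Fin n) → ℝ≥0
  | [] => 0
  | [i] => x i
  | i :: j :: l => γ i j (pval γ x (j :: l))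

lemma chainTo_mono (γ : Fin n → Fin n → ℝ≥0 → ℝ≥0) (hmono : ∀ i j, Monotone (γ i j)) :
    ∀ l v, Monotone (chainTo γ l v)
  | [], _ => monotone_id
  | [i], v => hmono i v
  | i :: j :: l, v => (hmono i j).comp (chainTo_mono γ hmono (j :: l) v)

lemma chainTo_zero (γ : Fin n → Fin n → ℝ≥0 → ℝ≥0) (hzero : ∀ i j, γ i j 0 = 0) :
    ∀ l v, chainTo γ l v 0 = 0
  | [], _ => rfl
  | [i], v => hzero i v
  | i :: j :: l, v => by
      show γ i j (chainTo γ (j :: l) v 0) = 0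
      rw [chainTo_zero γ hzero (j :: l) v, hzero]

lemma pval_split (γ : Fin n → Fin n → ℝ≥0 → ℝ≥0) (x : Fin n → ℝ≥0) :
    ∀ (a : List (Fin n)) (v : Fin n) (r : List (Fin n)),
      pval γ x (a ++ v :: r) = chainTo γ a v (pval γ x (v :: r))
  | [], v, r => rfl
  | [i], v, r => rfl
  | i :: j :: a, v, r => by
      show γ i j (pval γ x (j :: (a ++ v :: r)))
        = γ i j (chainTo γ (j :: a) v (pval γ x (v :: r)))
      rw [← pval_split γ x (j :: a) v r]
      rfl

lemma cycle_aux (γ : Fin n → Fin n → ℝ≥0 → ℝ≥0) :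
    ∀ (l : List (Fin n)) (i v : Fin n),
      (((i :: l).zip (l ++ [v])).map fun p => γ p.1 p.2).foldr (· ∘ ·) id
        = chainTo γ (i :: l) v
  | [], i, v => rfl
  | j :: l, i, v => by
      show γ i j ∘ (((j :: l).zip (l ++ [v])).map fun p => γ p.1 p.2).foldr (· ∘ ·) id
        = γ i j ∘ chainTo γ (j :: l) v
      rw [cycle_aux γ l j v]

lemma cycleGain_eq (γ : Fin n → Fin n → ℝ≥0 → ℝ≥0) (b : List (Fin n)) (v : Fin n) :
    cycleGain γ (v :: b) = chainTo γ (v :: b) v := by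
  unfold cycleGain
  rw [show (v :: b).rotate 1 = b ++ [v] by
    rw [List.rotate_cons_succ, List.rotate_zero]]
  exact cycle_aux γ b v v

lemma exists_dup {α : Type*} :
    ∀ (p : List α), ¬ p.Nodup → ∃ (a : List α) (v : α) (b c : List α),
      p = a ++ v :: b ++ v :: c
  | [], hp => absurd List.nodup_nil hp
  | h :: t, hp => by
      by_cases hm : h ∈ t
      · obtain ⟨b, c, rfl⟩ := List.append_of_mem hm
        exact ⟨[], h, b, c, rfl⟩
      · have ht : ¬ t.Nodup := fun hnd => hp (List.nodup_cons.mpr ⟨hm, hnd⟩)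
        obtain ⟨a, v, b, c, rfl⟩ := exists_dup t ht
        exact ⟨h :: a, v, b, c, rfl⟩

lemma exists_dup_nodup {α : Type*} :
    ∀ (N : ℕ) (p : List α), p.length ≤ N → ¬ p.Nodup →
      ∃ (a : List α) (v : α) (b c : List α),
        p = a ++ v :: b ++ v :: c ∧ (v :: b).Nodup := by
  intro N
  induction N with
  | zero =>
      intro p hl hp
      have : p = [] := List.length_eq_zero_iff.mp (Nat.le_zero.mp hl)
      subst this
      exact absurd List.nodup_nil hp
  | succ N ih =>
      intro p hl hp
      obtain ⟨a, v, b, c, rfl⟩ := exists_dup p hp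
      by_cases hb : (v :: b).Nodup
      · exact ⟨a, v, b, c, rfl, hb⟩
      · have hlen : (v :: b).length ≤ N := by
          have := hl
          simp only [List.length_append, List.length_cons] at this ⊢
          omega
        obtain ⟨a', w, b', c', heq, hnd⟩ := ih (v :: b) hlen hb
        refine ⟨a ++ a', w, b', c' ++ v :: c, ?_, hnd⟩
        have : (v :: b) ++ v :: c = a' ++ w :: b' ++ w :: (c' ++ v :: c) := by
          rw [heq]; simp
        calc a ++ v :: b ++ v :: c = a ++ ((v :: b) ++ v :: c) := by simp
          _ = a ++ (a' ++ w :: b' ++ w :: (c' ++ v :: c)) := by rw [this]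
          _ = a ++ a' ++ w :: b' ++ w :: (c' ++ v :: c) := by simp

end SGaux

open SGaux

theorem gamma_Q_le_Q {n : ℕ} (hn : 0 < n)
    (γ : Fin n → Fin n → ℝ≥0 → ℝ≥0)
    (hmono : ∀ i j, Monotone (γ i j)) (hcont : ∀ i j, Continuous (γ i j))
    (hzero : ∀ i j, γ i j 0 = 0)
    (Γ : (Fin n → ℝ≥0) → (Fin n → ℝ≥0))
    (hΓ : ∀ x i, Γ x i = Finset.univ.sup fun j : Fin n => γ i j (x j))
    (hsg : CyclicSmallGain γ)
    (Q : (Fin n → ℝ≥0) → (Fin n → ℝ≥0))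
    (hQ : ∀ x, Q x = (Finset.range n).sup fun k => Γ^[k] x) :
    ∀ x : Fin n → ℝ≥0, Γ (Q x) ≤ Q x ∧ x ≤ Q x := by
  intro x
  -- value of a path of length k+1 is at most Γ^[k] x at the head
  have pval_le_iterate : ∀ (l : List (Fin n)) (i : Fin n),
      pval γ x (i :: l) ≤ Γ^[l.length] x i := by
    intro l
    induction l with
    | nil => intro i; simp [pval]
    | cons j l ih =>
        intro i
        have h1 : pval γ x (i :: j :: l) = γ i j (pval γ x (j :: l)) := rfl
        calc pval γ x (i :: j :: l) = γ i j (pval γ x (j :: l)) := h1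
          _ ≤ γ i j (Γ^[l.length] x j) := hmono i j (ih j)
          _ ≤ Finset.univ.sup (fun j' => γ i j' (Γ^[l.length] x j')) :=
              Finset.le_sup (f := fun j' => γ i j' (Γ^[l.length] x j')) (Finset.mem_univ j)
          _ = Γ (Γ^[l.length] x) i := (hΓ _ i).symm
          _ = Γ^[(j :: l).length] x i := by
              rw [List.length_cons, Function.iterate_succ_apply']
  -- Γ^[k] x i is attained as the value of some path of length k+1
  have exists_pval : ∀ (k : ℕ) (i : Fin n),
      ∃ l : List (Fin n), l.length = k ∧ Γ^[k] x i = pval γ x (i :: l) := by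
    intro k
    induction k with
    | zero => intro i; exact ⟨[], rfl, by simp [pval]⟩
    | succ k ih =>
        intro i
        have hiter : Γ^[k + 1] x i = Finset.univ.sup (fun j => γ i j (Γ^[k] x j)) := by
          rw [Function.iterate_succ_apply', hΓ]
        obtain ⟨j, -, hj⟩ := Finset.exists_mem_eq_sup Finset.univ
          (Finset.univ_nonempty_iff.mpr ⟨⟨0, hn⟩⟩) (fun j => γ i j (Γ^[k] x j))
        obtain ⟨l, hlen, hval⟩ := ih j
        refine ⟨j :: l, by simp [hlen], ?_⟩
        rw [hiter, hj]
        show γ i j (Γ^[k] x j) = γ i j (pval γ x (j :: l))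
        rw [hval]
  -- every path value is bounded by the corresponding component of Q x
  have main : ∀ (N : ℕ) (l : List (Fin n)) (i : Fin n), l.length ≤ N →
      pval γ x (i :: l) ≤ (Finset.range n).sup (fun k => Γ^[k] x i) := by
    intro N
    induction N with
    | zero =>
        intro l i hl
        have : l = [] := List.length_eq_zero_iff.mp (Nat.le_zero.mp hl)
        subst this
        calc pval γ x [i] = Γ^[0] x i := by simp [pval]
          _ ≤ _ := Finset.le_sup (f := fun k => Γ^[k] x i) (Finset.mem_range.mpr hn)
    | succ N ih =>
        intro l i hl
        by_cases hsmall : l.length < n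
        · exact le_trans (pval_le_iterate l i)
            (Finset.le_sup (f := fun k => Γ^[k] x i) (Finset.mem_range.mpr hsmall))
        · have hnd : ¬ (i :: l).Nodup := by
            intro h
            have hcard := h.length_le_card
            simp only [List.length_cons, Fintype.card_fin] at hcard
            omega
          obtain ⟨a, v, b, c, hp, hnb⟩ :=
            exists_dup_nodup (N + 2) (i :: l) (by simp; omega) hnd
          -- remove the cycle
          have hshort : pval γ x (v :: (b ++ v :: c)) ≤ pval γ x (v :: c) := by
            have heq : pval γ x (v :: (b ++ v :: c))
                = chainTo γ (v :: b) v (pval γ x (v :: c)) := by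
              have := pval_split γ x (v :: b) v c
              simpa using this
            rw [heq]
            rcases eq_or_lt_of_le (zero_le : (0 : ℝ≥0) ≤ pval γ x (v :: c)) with h0 | h0
            · rw [← h0, chainTo_zero γ hzero]
            · have hlt := hsg (v :: b) hnb (by simp) _ h0
              rw [cycleGain_eq] at hlt
              exact hlt.le
          have key : pval γ x (i :: l) ≤ pval γ x (a ++ v :: c) := by
            rw [hp]
            have h1 : pval γ x (a ++ v :: (b ++ v :: c))
                = chainTo γ a v (pval γ x (v :: (b ++ v :: c))) :=
              pval_split γ x a v (b ++ v :: c)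
            have h2 : pval γ x (a ++ v :: c)
                = chainTo γ a v (pval γ x (v :: c)) := pval_split γ x a v c
            calc pval γ x (a ++ v :: b ++ v :: c)
                = chainTo γ a v (pval γ x (v :: (b ++ v :: c))) := by
                  rw [← h1]; simp
              _ ≤ chainTo γ a v (pval γ x (v :: c)) :=
                  chainTo_mono γ hmono a v hshort
              _ = pval γ x (a ++ v :: c) := h2.symm
          cases a with
          | nil =>
              injection hp with h1 hl'
              subst h1
              have hc : c.length ≤ N := by
                rw [hl'] at hl
                simp only [List.append_eq, List.length_append, List.length_cons] at hl
                omega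
              exact le_trans key (ih c i hc)
          | cons a₀ a' =>
              injection hp with h1 hl'
              subst h1
              have hc : (a' ++ v :: c).length ≤ N := by
                rw [hl'] at hl
                simp only [List.append_eq, List.length_append, List.length_cons] at hl ⊢
                omega
              exact le_trans key (ih (a' ++ v :: c) i hc)
  -- each iterate is bounded by Q x
  have iter_le : ∀ (k : ℕ) (i : Fin n), Γ^[k] x i ≤ Q x i := by
    intro k i
    obtain ⟨l, hlen, hval⟩ := exists_pval k i
    rw [hval, hQ, Finset.sup_apply]
    exact main l.length l i le_rfl
  constructor
  · intro i
    rw [hΓ]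
    apply Finset.sup_le
    intro j _
    obtain ⟨k, hk, hkeq⟩ := Finset.exists_mem_eq_sup (Finset.range n)
      (Finset.nonempty_range_iff.mpr hn.ne') (fun k => Γ^[k] x j)
    have hQj : Q x j = Γ^[k] x j := by rw [hQ, Finset.sup_apply]; exact hkeq
    calc γ i j (Q x j) = γ i j (Γ^[k] x j) := by rw [hQj]
      _ ≤ Finset.univ.sup (fun j' => γ i j' (Γ^[k] x j')) :=
          Finset.le_sup (f := fun j' => γ i j' (Γ^[k] x j')) (Finset.mem_univ j)
      _ = Γ (Γ^[k] x) i := (hΓ _ i).symm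
      _ = Γ^[k + 1] x i := by rw [Function.iterate_succ_apply']
      _ ≤ Q x i := iter_le (k + 1) i
  · intro i
    have hQi : Q x i = (Finset.range n).sup (fun k => Γ^[k] x i) := by
      rw [hQ, Finset.sup_apply]
    rw [hQi]
    calc x i = Γ^[0] x i := by simp
      _ ≤ _ := Finset.le_sup (f := fun k => Γ^[k] x i) (Finset.mem_range.mpr hn)
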